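/- Over the alphabet A = {x, y}, the 2-variable languages L_1 = {(x^n y x^m, x^k y x^n) : n, m, k >= 0} and L_2 = {(x^n y x^m, x^n y x^k) : n, m, k >= 0} are both quasi-regular (and hence weakly regular), but their intersection L_1 intersect L_2 = {(x^n y x^m, x^n y x^n) : n, m >= 0} is not weakly regular. In particular, weakly regular languages are not closed under intersection. -/

import Mathlib

/-- An `n`-tape semi-sorted (deterministic) asynchronous automaton over `A`:
a partial deterministic finite state automaton over `A ∪ {$}` (unique start state,
no `ε`-transitions, at most one transition from each state for each letter; the
padding symbol `$` is modelled by `none : Option A`), together with a partition of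
its states into `n` sets (recorded by `tape`, where `tape s = i` means `s ∈ S_i`). -/
structure SemiSortedAA (A : Type) (n : ℕ) where
  State : Type
  fintype : Fintype State
  start : State
  accept : Set State
  /-- partial deterministic transition function over the alphabet `A ∪ {$}` -/
  step : State → Option A → Option State
  /-- the index `i` such that the state lies in `S_i` -/
  tape : State → Fin n

namespace SemiSortedAA

variable {A : Type} {n : ℕ}

/-- `M.Run s r f` : starting in state `s` with remaining (still unread) content `r i`
on the `i`-th tape, the automaton can consume all the remaining content and end in
state `f`, where from a state `s` it reads the next letter of tape `M.tape s`.
This is exactly the existence of a shuffle of the tape contents labelling a path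
from `s` to `f` in which every letter originating from the `i`-th tape is read
while the automaton is in a state of `S_i`. -/
inductive Run (M : SemiSortedAA A n) :
    M.State → (Fin n → List (Option A)) → M.State → Prop
  | nil (s : M.State) : Run M s (fun _ => []) s
  | step {s t f : M.State} {c : Option A} {rest : List (Option A)}
      {r : Fin n → List (Option A)}
      (h : M.step s c = some t)
      (hr : r (M.tape s) = c :: rest)
      (hrun : Run M t (Function.update r (M.tape s) rest) f) :
      Run M s r f

/-- `M` accepts the tuple of words `(w 1, …, w n)` if some shuffle of
`(w 1 $, …, w n $)` labels a path from the start state to an accept state,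
each letter from the `i`-th word (including its terminal `$`) being read in `S_i`. -/
def Accepts (M : SemiSortedAA A n) (w : Fin n → List A) : Prop :=
  ∃ f ∈ M.accept, M.Run M.start (fun i => (w i).map some ++ [none]) f

end SemiSortedAA

/-- An `n`-variable language is quasi-regular if it is the language accepted by some
`n`-tape semi-sorted asynchronous automaton. -/
def IsQuasiRegular {A : Type} {n : ℕ} (L : Set (Fin n → List A)) : Prop :=
  ∃ M : SemiSortedAA A n, ∀ w, w ∈ L ↔ M.Accepts w

/-- An `n`-tape non-deterministic semi-sorted asynchronous automaton (SAA) over `A`: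
a non-deterministic finite state automaton over `A ∪ {$}` (possibly with
`ε`-transitions and several start states; the padding symbol `$` is modelled by
`none : Option A`) together with a partition of its state set into `n` sets
(recorded by `tape`, where `tape s = i` means `s ∈ S_i`). -/
structure SAA (A : Type) (n : ℕ) where
  State : Type
  fintype : Fintype State
  start : Set State
  accept : Set State
  /-- non-deterministic transitions labelled by letters of `A ∪ {$}` -/
  step : State → Option A → Set State
  /-- `ε`-transitions -/
  eps : State → Set State
  /-- the index `i` such that the state lies in `S_i` -/
  tape : State → Fin n

namespace SAA

variable {A : Type} {n : ℕ}

/-- Runs of a non-deterministic semi-sorted asynchronous automaton: `M.Run s r f`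
means that starting at `s` with remaining content `r i` on the `i`-th tape, the
automaton can consume all the remaining content and end at `f`, reading from tape
`M.tape s` when in state `s` (this is the existence of an appropriate shuffle). -/
inductive Run (M : SAA A n) :
    M.State → (Fin n → List (Option A)) → M.State → Prop
  | nil (s : M.State) : Run M s (fun _ => []) s
  | eps {s t f : M.State} {r : Fin n → List (Option A)}
      (h : t ∈ M.eps s) (hrun : Run M t r f) : Run M s r f
  | step {s t f : M.State} {c : Option A} {rest : List (Option A)}
      {r : Fin n → List (Option A)}
      (h : t ∈ M.step s c)
      (hr : r (M.tape s) = c :: rest)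
      (hrun : Run M t (Function.update r (M.tape s) rest) f) :
      Run M s r f

/-- The SAA accepts `(w 1, …, w n)` if some shuffle of `(w 1 $, …, w n $)` labels a
path from a start state to an accept state, each letter from the `i`-th word being
read while the automaton is in a state of `S_i`. -/
def Accepts (M : SAA A n) (w : Fin n → List A) : Prop :=
  ∃ s₀ ∈ M.start, ∃ f ∈ M.accept,
    M.Run s₀ (fun i => (w i).map some ++ [none]) f

end SAA

/-- An `n`-variable language is weakly regular if it is the language accepted by some
`n`-tape non-deterministic semi-sorted asynchronous automaton. -/
def IsWeaklyRegular {A : Type} {n : ℕ} (L : Set (Fin n → List A)) : Prop :=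
  ∃ M : SAA A n, ∀ w, w ∈ L ↔ M.Accepts w

/-- Over the alphabet `{x, y}` (modelled by `Fin 2`, `x = 0`, `y = 1`), the
language `L₁ = {(x^n y x^m, x^k y x^n)}`. -/
def L₁ : Set (Fin 2 → List (Fin 2)) :=
  { w | ∃ n m k : ℕ,
      w 0 = List.replicate n 0 ++ 1 :: List.replicate m 0 ∧
      w 1 = List.replicate k 0 ++ 1 :: List.replicate n 0 }

/-- Over the alphabet `{x, y}`, the language `L₂ = {(x^n y x^m, x^n y x^k)}`. -/
def L₂ : Set (Fin 2 → List (Fin 2)) :=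
  { w | ∃ n m k : ℕ,
      w 0 = List.replicate n 0 ++ 1 :: List.replicate m 0 ∧
      w 1 = List.replicate n 0 ++ 1 :: List.replicate k 0 }


-- generic helpers
namespace SemiSortedAA
variable {A : Type} {n : ℕ} {M : SemiSortedAA A n}

lemma run_append {s m f : M.State} {r r' : Fin n → List (Option A)}
    (h1 : M.Run s r m) (h2 : M.Run m r' f) : M.Run s (fun i => r i ++ r' i) f := by
  induction h1 with
  | nil s => simpa using h2
  | @step s t g c rest r h hr _ ih =>
      refine Run.step h (show r (M.tape s) ++ r' (M.tape s) = c :: (rest ++ r' (M.tape s)) by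
        rw [hr]; rfl) ?_
      have : (Function.update (fun i => r i ++ r' i) (M.tape s) (rest ++ r' (M.tape s)))
          = fun i => Function.update r (M.tape s) rest i ++ r' i := by
        funext i
        by_cases hi : i = M.tape s
        · subst hi; simp
        · simp [Function.update_of_ne hi]
      rw [this]; exact ih h2

end SemiSortedAA


namespace NC
open List

inductive St6 where | q0 | q1 | q2 | q3 | q4 | q5
deriving DecidableEq

instance : Fintype St6 :=
  ⟨{.q0, .q1, .q2, .q3, .q4, .q5}, fun x => by cases x <;> simp⟩

abbrev X : Option (Fin 2) := some 0
abbrev Y : Option (Fin 2) := some 1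
abbrev E : Option (Fin 2) := none
abbrev xs (n : ℕ) : List (Option (Fin 2)) := List.replicate n X

def M1 : SemiSortedAA (Fin 2) 2 where
  State := St6
  fintype := inferInstance
  start := .q0
  accept := {.q5}
  step s c :=
    match s, c with
    | .q0, some 0 => some .q0
    | .q0, some 1 => some .q1
    | .q1, some 0 => some .q2
    | .q1, some 1 => some .q3
    | .q2, some 0 => some .q1
    | .q3, some 0 => some .q3
    | .q3, none => some .q4
    | .q4, none => some .q5
    | _, _ => none
  tape s := match s with | .q0 => 1 | .q1 => 0 | .q2 => 1 | .q3 => 0 | .q4 => 1 | .q5 => 0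

def Good1 : St6 → (Fin 2 → List (Option (Fin 2))) → Prop
  | .q0, r => ∃ n m k, r 0 = xs n ++ Y :: xs m ++ [E] ∧ r 1 = xs k ++ Y :: xs n ++ [E]
  | .q1, r => ∃ n m, r 0 = xs n ++ Y :: xs m ++ [E] ∧ r 1 = xs n ++ [E]
  | .q2, r => ∃ n m, r 0 = xs n ++ Y :: xs m ++ [E] ∧ r 1 = xs (n+1) ++ [E]
  | .q3, r => ∃ m, r 0 = xs m ++ [E] ∧ r 1 = [E]
  | .q4, r => r 0 = [] ∧ r 1 = [E]
  | .q5, r => r 0 = [] ∧ r 1 = []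

lemma good1_of_run {s : M1.State} {r} {f : M1.State} (hrun : M1.Run s r f)
    (hf : f ∈ M1.accept) : Good1 s r := by
  induction hrun with
  | nil s =>
      have : s = St6.q5 := hf
      subst this; exact ⟨rfl, rfl⟩
  | @step s t f c rest r h hr _ ih =>
      cases s with
      | q0 =>
          rcases c with _ | c
          · simp [M1] at h
          · have ht : M1.tape St6.q0 = 1 := rfl
            rw [ht] at hr ih
            fin_cases c
            · -- c = X, t = q0
              have : St6.q0 = t := by simp [M1] at h; exact Option.some.inj h
              subst this
              obtain ⟨n, m, k, h0, h1⟩ := ih hf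
              rw [Function.update_of_ne (by decide)] at h0
              rw [Function.update_self] at h1
              exact ⟨n, m, k+1, h0, by rw [hr, h1]; simp [xs, List.replicate_succ]⟩
            · have : St6.q1 = t := by simp [M1] at h; exact Option.some.inj h
              subst this
              obtain ⟨n, m, h0, h1⟩ := ih hf
              rw [Function.update_of_ne (by decide)] at h0
              rw [Function.update_self] at h1
              exact ⟨n, m, 0, h0, by rw [hr, h1]; simp⟩
      | q1 =>
          rcases c with _ | c
          · simp [M1] at h
          · have ht : M1.tape St6.q1 = 0 := rfl
            rw [ht] at hr ih
            fin_cases c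
            · have : St6.q2 = t := by simp [M1] at h; exact Option.some.inj h
              subst this
              obtain ⟨n, m, h0, h1⟩ := ih hf
              rw [Function.update_self] at h0
              rw [Function.update_of_ne (by decide)] at h1
              exact ⟨n+1, m, by rw [hr, h0]; simp [xs, List.replicate_succ], h1⟩
            · have : St6.q3 = t := by simp [M1] at h; exact Option.some.inj h
              subst this
              obtain ⟨m, h0, h1⟩ := ih hf
              rw [Function.update_self] at h0
              rw [Function.update_of_ne (by decide)] at h1
              exact ⟨0, m, by rw [hr, h0]; simp, by rw [h1]; simp⟩
      | q2 =>
          rcases c with _ | c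
          · simp [M1] at h
          · have ht : M1.tape St6.q2 = 1 := rfl
            rw [ht] at hr ih
            fin_cases c
            · have : St6.q1 = t := by simp [M1] at h; exact Option.some.inj h
              subst this
              obtain ⟨n, m, h0, h1⟩ := ih hf
              rw [Function.update_of_ne (by decide)] at h0
              rw [Function.update_self] at h1
              exact ⟨n, m, h0, by rw [hr, h1]; simp [xs, List.replicate_succ]⟩
            · simp [M1] at h
      | q3 =>
          have ht : M1.tape St6.q3 = 0 := rfl
          rw [ht] at hr ih
          rcases c with _ | c
          · have : St6.q4 = t := by simp [M1] at h; exact Option.some.inj h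
            subst this
            obtain ⟨h0, h1⟩ := ih hf
            rw [Function.update_self] at h0
            rw [Function.update_of_ne (by decide)] at h1
            exact ⟨0, by rw [hr, h0]; simp, h1⟩
          · fin_cases c
            · have : St6.q3 = t := by simp [M1] at h; exact Option.some.inj h
              subst this
              obtain ⟨m, h0, h1⟩ := ih hf
              rw [Function.update_self] at h0
              rw [Function.update_of_ne (by decide)] at h1
              exact ⟨m+1, by rw [hr, h0]; simp [xs, List.replicate_succ], h1⟩
            · simp [M1] at h
      | q4 =>
          have ht : M1.tape St6.q4 = 1 := rfl
          rw [ht] at hr ih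
          rcases c with _ | c
          · have : St6.q5 = t := by simp [M1] at h; exact Option.some.inj h
            subst this
            obtain ⟨h0, h1⟩ := ih hf
            rw [Function.update_of_ne (by decide)] at h0
            rw [Function.update_self] at h1
            exact ⟨h0, by rw [hr, h1]⟩
          · fin_cases c <;> simp [M1] at h
      | q5 => rcases c with _ | c; · simp [M1] at h
              · fin_cases c <;> simp [M1] at h

end NC

namespace NC
open List

lemma runA1 : ∀ k, M1.Run .q0 ![[], xs k ++ [Y]] .q1
  | 0 => by
      refine SemiSortedAA.Run.step (t := St6.q1) (c := Y) (rest := []) (by simp [M1]) (by simp [M1, xs]) ?_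
      have : Function.update ![([] : List (Option (Fin 2))), xs 0 ++ [Y]] (M1.tape .q0) [] =
          (fun _ => []) := by
        funext i; fin_cases i <;> simp [M1, Function.update]
      rw [this]; exact SemiSortedAA.Run.nil _
  | (k+1) => by
      refine SemiSortedAA.Run.step (t := St6.q0) (c := X) (rest := xs k ++ [Y]) (by simp [M1]) (by simp [M1, xs, List.replicate_succ]) ?_
      have : Function.update ![([] : List (Option (Fin 2))), xs (k+1) ++ [Y]] (M1.tape .q0) (xs k ++ [Y]) =
          ![[], xs k ++ [Y]] := by
        funext i; fin_cases i <;> simp [M1, Function.update]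
      rw [this]; exact runA1 k

lemma runA2 : ∀ n, M1.Run .q1 ![xs n, xs n] .q1
  | 0 => by
      have : (![xs 0, xs 0] : Fin 2 → List (Option (Fin 2))) = fun _ => [] := by
        funext i; fin_cases i <;> simp
      rw [this]; exact SemiSortedAA.Run.nil _
  | (n+1) => by
      refine SemiSortedAA.Run.step (t := St6.q2) (c := X) (rest := xs n) (by simp [M1]) (by simp [M1, xs, List.replicate_succ]) ?_
      have : Function.update ![xs (n+1), xs (n+1)] (M1.tape .q1) (xs n) = ![xs n, xs (n+1)] := by
        funext i; fin_cases i <;> simp [M1, Function.update]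
      rw [this]
      refine SemiSortedAA.Run.step (t := St6.q1) (c := X) (rest := xs n) (by simp [M1]) (by simp [M1, xs, List.replicate_succ]) ?_
      have : Function.update ![xs n, xs (n+1)] (M1.tape .q2) (xs n) = ![xs n, xs n] := by
        funext i; fin_cases i <;> simp [M1, Function.update]
      rw [this]; exact runA2 n

lemma runA3 : M1.Run .q1 ![[Y], []] .q3 := by
  refine SemiSortedAA.Run.step (t := St6.q3) (c := Y) (rest := []) (by simp [M1]) (by simp [M1]) ?_
  have : Function.update ![[Y], ([] : List (Option (Fin 2)))] (M1.tape .q1) [] = fun _ => [] := by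
    funext i; fin_cases i <;> simp [M1, Function.update]
  rw [this]; exact SemiSortedAA.Run.nil _

lemma runA4 : ∀ m, M1.Run .q3 ![xs m, []] .q3
  | 0 => by
      have : (![xs 0, []] : Fin 2 → List (Option (Fin 2))) = fun _ => [] := by
        funext i; fin_cases i <;> simp
      rw [this]; exact SemiSortedAA.Run.nil _
  | (m+1) => by
      refine SemiSortedAA.Run.step (t := St6.q3) (c := X) (rest := xs m) (by simp [M1]) (by simp [M1, xs, List.replicate_succ]) ?_
      have : Function.update ![xs (m+1), ([] : List (Option (Fin 2)))] (M1.tape .q3) (xs m) = ![xs m, []] := by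
        funext i; fin_cases i <;> simp [M1, Function.update]
      rw [this]; exact runA4 m

lemma runA5 : M1.Run .q3 ![[E], []] .q4 := by
  refine SemiSortedAA.Run.step (t := St6.q4) (c := E) (rest := []) (by simp [M1]) (by simp [M1]) ?_
  have : Function.update ![[E], ([] : List (Option (Fin 2)))] (M1.tape .q3) [] = fun _ => [] := by
    funext i; fin_cases i <;> simp [M1, Function.update]
  rw [this]; exact SemiSortedAA.Run.nil _

lemma runA6 : M1.Run .q4 ![[], [E]] .q5 := by
  refine SemiSortedAA.Run.step (t := St6.q5) (c := E) (rest := []) (by simp [M1]) (by simp [M1]) ?_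
  have : Function.update ![([] : List (Option (Fin 2))), [E]] (M1.tape .q4) [] = fun _ => [] := by
    funext i; fin_cases i <;> simp [M1, Function.update]
  rw [this]; exact SemiSortedAA.Run.nil _

lemma M1_run_full (n m k : ℕ) :
    M1.Run .q0 ![xs n ++ Y :: xs m ++ [E], xs k ++ Y :: xs n ++ [E]] .q5 := by
  have h := SemiSortedAA.run_append (runA1 k) (SemiSortedAA.run_append (runA2 n)
    (SemiSortedAA.run_append runA3 (SemiSortedAA.run_append (runA4 m)
    (SemiSortedAA.run_append runA5 runA6))))
  have e : (fun i => (![[], xs k ++ [Y]] : Fin 2 → List (Option (Fin 2))) i ++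
      (![xs n, xs n] i ++ (![[Y],[]] i ++ (![xs m, []] i ++ (![[E],[]] i ++ ![[],[E]] i))))) =
      ![xs n ++ Y :: xs m ++ [E], xs k ++ Y :: xs n ++ [E]] := by
    funext i; fin_cases i <;> simp
  rwa [e] at h

end NC

namespace NC
open List

lemma mapsome_cancel {α : Type*} {a b : List α}
    (h : List.map some a ++ [none] = List.map some b ++ [none]) : a = b := by
  have := (List.append_inj' h rfl).1
  exact List.map_injective_iff.mpr (Option.some_injective _) this

lemma word_eq {w : List (Fin 2)} {n m : ℕ}
    (h : List.map some w ++ [none] = xs n ++ Y :: xs m ++ [E]) :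
    w = List.replicate n 0 ++ 1 :: List.replicate m 0 := by
  apply mapsome_cancel
  rw [h]; simp [xs]

lemma quasi_L1 : IsQuasiRegular L₁ := by
  refine ⟨M1, fun w => ⟨?_, ?_⟩⟩
  · rintro ⟨n, m, k, hw0, hw1⟩
    refine ⟨St6.q5, rfl, ?_⟩
    have e : (fun i => (w i).map some ++ [none]) =
        ![xs n ++ Y :: xs m ++ [E], xs k ++ Y :: xs n ++ [E]] := by
      funext i; fin_cases i <;>
        simp only [show (⟨0, by omega⟩ : Fin 2) = 0 from rfl, show (⟨1, by omega⟩ : Fin 2) = 1 from rfl] <;>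
        [rw [hw0]; rw [hw1]] <;> simp [xs]
    rw [e]; exact M1_run_full n m k
  · rintro ⟨f, hf, hrun⟩
    have hg := good1_of_run hrun hf
    obtain ⟨n, m, k, h0, h1⟩ := hg
    exact ⟨n, m, k, word_eq h0, word_eq h1⟩
end NC

namespace NC
open List

def M2 : SemiSortedAA (Fin 2) 2 where
  State := St6
  fintype := inferInstance
  start := .q0
  accept := {.q5}
  step s c :=
    match s, c with
    | .q0, some 0 => some .q1
    | .q0, some 1 => some .q2
    | .q1, some 0 => some .q0
    | .q2, some 1 => some .q3
    | .q3, some 0 => some .q3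
    | .q3, none => some .q4
    | .q4, some 0 => some .q4
    | .q4, none => some .q5
    | _, _ => none
  tape s := match s with | .q0 => 0 | .q1 => 1 | .q2 => 1 | .q3 => 0 | .q4 => 1 | .q5 => 0

def Good2 : St6 → (Fin 2 → List (Option (Fin 2))) → Prop
  | .q0, r => ∃ n m k, r 0 = xs n ++ Y :: xs m ++ [E] ∧ r 1 = xs n ++ Y :: xs k ++ [E]
  | .q1, r => ∃ n m k, r 0 = xs n ++ Y :: xs m ++ [E] ∧ r 1 = xs (n+1) ++ Y :: xs k ++ [E]
  | .q2, r => ∃ m k, r 0 = xs m ++ [E] ∧ r 1 = Y :: xs k ++ [E]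
  | .q3, r => ∃ m k, r 0 = xs m ++ [E] ∧ r 1 = xs k ++ [E]
  | .q4, r => ∃ k, r 0 = [] ∧ r 1 = xs k ++ [E]
  | .q5, r => r 0 = [] ∧ r 1 = []

lemma good2_of_run {s : M2.State} {r} {f : M2.State} (hrun : M2.Run s r f)
    (hf : f ∈ M2.accept) : Good2 s r := by
  induction hrun with
  | nil s =>
      have : s = St6.q5 := hf
      subst this; exact ⟨rfl, rfl⟩
  | @step s t f c rest r h hr _ ih =>
      cases s with
      | q0 =>
          rcases c with _ | c
          · simp [M2] at h
          · have ht : M2.tape St6.q0 = 0 := rfl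
            rw [ht] at hr ih
            fin_cases c
            · have : St6.q1 = t := by simp [M2] at h; exact Option.some.inj h
              subst this
              obtain ⟨n, m, k, h0, h1⟩ := ih hf
              rw [Function.update_self] at h0
              rw [Function.update_of_ne (by decide)] at h1
              exact ⟨n+1, m, k, by rw [hr, h0]; simp [xs, List.replicate_succ], h1⟩
            · have : St6.q2 = t := by simp [M2] at h; exact Option.some.inj h
              subst this
              obtain ⟨m, k, h0, h1⟩ := ih hf
              rw [Function.update_self] at h0
              rw [Function.update_of_ne (by decide)] at h1
              exact ⟨0, m, k, by rw [hr, h0]; simp, by rw [h1]; simp⟩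
      | q1 =>
          rcases c with _ | c
          · simp [M2] at h
          · have ht : M2.tape St6.q1 = 1 := rfl
            rw [ht] at hr ih
            fin_cases c
            · have : St6.q0 = t := by simp [M2] at h; exact Option.some.inj h
              subst this
              obtain ⟨n, m, k, h0, h1⟩ := ih hf
              rw [Function.update_of_ne (by decide)] at h0
              rw [Function.update_self] at h1
              exact ⟨n, m, k, h0, by rw [hr, h1]; simp [xs, List.replicate_succ]⟩
            · simp [M2] at h
      | q2 =>
          rcases c with _ | c
          · simp [M2] at h
          · have ht : M2.tape St6.q2 = 1 := rfl
            rw [ht] at hr ih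
            fin_cases c
            · simp [M2] at h
            · have : St6.q3 = t := by simp [M2] at h; exact Option.some.inj h
              subst this
              obtain ⟨m, k, h0, h1⟩ := ih hf
              rw [Function.update_of_ne (by decide)] at h0
              rw [Function.update_self] at h1
              exact ⟨m, k, h0, by rw [hr, h1]; rfl⟩
      | q3 =>
          have ht : M2.tape St6.q3 = 0 := rfl
          rw [ht] at hr ih
          rcases c with _ | c
          · have : St6.q4 = t := by simp [M2] at h; exact Option.some.inj h
            subst this
            obtain ⟨k, h0, h1⟩ := ih hf
            rw [Function.update_self] at h0
            rw [Function.update_of_ne (by decide)] at h1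
            exact ⟨0, k, by rw [hr, h0]; simp, h1⟩
          · fin_cases c
            · have : St6.q3 = t := by simp [M2] at h; exact Option.some.inj h
              subst this
              obtain ⟨m, k, h0, h1⟩ := ih hf
              rw [Function.update_self] at h0
              rw [Function.update_of_ne (by decide)] at h1
              exact ⟨m+1, k, by rw [hr, h0]; simp [xs, List.replicate_succ], h1⟩
            · simp [M2] at h
      | q4 =>
          have ht : M2.tape St6.q4 = 1 := rfl
          rw [ht] at hr ih
          rcases c with _ | c
          · have : St6.q5 = t := by simp [M2] at h; exact Option.some.inj h
            subst this
            obtain ⟨h0, h1⟩ := ih hf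
            rw [Function.update_of_ne (by decide)] at h0
            rw [Function.update_self] at h1
            exact ⟨0, h0, by rw [hr, h1]; simp⟩
          · fin_cases c
            · have : St6.q4 = t := by simp [M2] at h; exact Option.some.inj h
              subst this
              obtain ⟨k, h0, h1⟩ := ih hf
              rw [Function.update_of_ne (by decide)] at h0
              rw [Function.update_self] at h1
              exact ⟨k+1, h0, by rw [hr, h1]; simp [xs, List.replicate_succ]⟩
            · simp [M2] at h
      | q5 => rcases c with _ | c; · simp [M2] at h
              · fin_cases c <;> simp [M2] at h

lemma runB1 : ∀ n, M2.Run .q0 ![xs n, xs n] .q0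
  | 0 => by
      have : (![xs 0, xs 0] : Fin 2 → List (Option (Fin 2))) = fun _ => [] := by
        funext i; fin_cases i <;> simp
      rw [this]; exact SemiSortedAA.Run.nil _
  | (n+1) => by
      refine SemiSortedAA.Run.step (t := St6.q1) (c := X) (rest := xs n) (by simp [M2]) (by simp [M2, xs, List.replicate_succ]) ?_
      have : Function.update ![xs (n+1), xs (n+1)] (M2.tape .q0) (xs n) = ![xs n, xs (n+1)] := by
        funext i; fin_cases i <;> simp [M2, Function.update]
      rw [this]
      refine SemiSortedAA.Run.step (t := St6.q0) (c := X) (rest := xs n) (by simp [M2]) (by simp [M2, xs, List.replicate_succ]) ?_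
      have : Function.update ![xs n, xs (n+1)] (M2.tape .q1) (xs n) = ![xs n, xs n] := by
        funext i; fin_cases i <;> simp [M2, Function.update]
      rw [this]; exact runB1 n

lemma runB2 : M2.Run .q0 ![[Y], []] .q2 := by
  refine SemiSortedAA.Run.step (t := St6.q2) (c := Y) (rest := []) (by simp [M2]) (by simp [M2]) ?_
  have : Function.update ![[Y], ([] : List (Option (Fin 2)))] (M2.tape .q0) [] = fun _ => [] := by
    funext i; fin_cases i <;> simp [M2, Function.update]
  rw [this]; exact SemiSortedAA.Run.nil _

lemma runB3 : M2.Run .q2 ![[], [Y]] .q3 := by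
  refine SemiSortedAA.Run.step (t := St6.q3) (c := Y) (rest := []) (by simp [M2]) (by simp [M2]) ?_
  have : Function.update ![([] : List (Option (Fin 2))), [Y]] (M2.tape .q2) [] = fun _ => [] := by
    funext i; fin_cases i <;> simp [M2, Function.update]
  rw [this]; exact SemiSortedAA.Run.nil _

lemma runB4 : ∀ m, M2.Run .q3 ![xs m, []] .q3
  | 0 => by
      have : (![xs 0, []] : Fin 2 → List (Option (Fin 2))) = fun _ => [] := by
        funext i; fin_cases i <;> simp
      rw [this]; exact SemiSortedAA.Run.nil _
  | (m+1) => by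
      refine SemiSortedAA.Run.step (t := St6.q3) (c := X) (rest := xs m) (by simp [M2]) (by simp [M2, xs, List.replicate_succ]) ?_
      have : Function.update ![xs (m+1), ([] : List (Option (Fin 2)))] (M2.tape .q3) (xs m) = ![xs m, []] := by
        funext i; fin_cases i <;> simp [M2, Function.update]
      rw [this]; exact runB4 m

lemma runB5 : M2.Run .q3 ![[E], []] .q4 := by
  refine SemiSortedAA.Run.step (t := St6.q4) (c := E) (rest := []) (by simp [M2]) (by simp [M2]) ?_
  have : Function.update ![[E], ([] : List (Option (Fin 2)))] (M2.tape .q3) [] = fun _ => [] := by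
    funext i; fin_cases i <;> simp [M2, Function.update]
  rw [this]; exact SemiSortedAA.Run.nil _

lemma runB6 : ∀ k, M2.Run .q4 ![[], xs k] .q4
  | 0 => by
      have : (![[], xs 0] : Fin 2 → List (Option (Fin 2))) = fun _ => [] := by
        funext i; fin_cases i <;> simp
      rw [this]; exact SemiSortedAA.Run.nil _
  | (k+1) => by
      refine SemiSortedAA.Run.step (t := St6.q4) (c := X) (rest := xs k) (by simp [M2]) (by simp [M2, xs, List.replicate_succ]) ?_
      have : Function.update ![([] : List (Option (Fin 2))), xs (k+1)] (M2.tape .q4) (xs k) = ![[], xs k] := by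
        funext i; fin_cases i <;> simp [M2, Function.update]
      rw [this]; exact runB6 k

lemma runB7 : M2.Run .q4 ![[], [E]] .q5 := by
  refine SemiSortedAA.Run.step (t := St6.q5) (c := E) (rest := []) (by simp [M2]) (by simp [M2]) ?_
  have : Function.update ![([] : List (Option (Fin 2))), [E]] (M2.tape .q4) [] = fun _ => [] := by
    funext i; fin_cases i <;> simp [M2, Function.update]
  rw [this]; exact SemiSortedAA.Run.nil _

lemma M2_run_full (n m k : ℕ) :
    M2.Run .q0 ![xs n ++ Y :: xs m ++ [E], xs n ++ Y :: xs k ++ [E]] .q5 := by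
  have h := SemiSortedAA.run_append (runB1 n) (SemiSortedAA.run_append runB2
    (SemiSortedAA.run_append runB3 (SemiSortedAA.run_append (runB4 m)
    (SemiSortedAA.run_append runB5 (SemiSortedAA.run_append (runB6 k) runB7)))))
  have e : (fun i => (![xs n, xs n] : Fin 2 → List (Option (Fin 2))) i ++
      (![[Y],[]] i ++ (![[],[Y]] i ++ (![xs m, []] i ++ (![[E],[]] i ++ (![[], xs k] i ++ ![[],[E]] i)))))) =
      ![xs n ++ Y :: xs m ++ [E], xs n ++ Y :: xs k ++ [E]] := by
    funext i; fin_cases i <;> simp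
  rwa [e] at h

lemma quasi_L2 : IsQuasiRegular L₂ := by
  refine ⟨M2, fun w => ⟨?_, ?_⟩⟩
  · rintro ⟨n, m, k, hw0, hw1⟩
    refine ⟨St6.q5, rfl, ?_⟩
    have e : (fun i => (w i).map some ++ [none]) =
        ![xs n ++ Y :: xs m ++ [E], xs n ++ Y :: xs k ++ [E]] := by
      funext i; fin_cases i <;>
        simp only [show (⟨0, by omega⟩ : Fin 2) = 0 from rfl, show (⟨1, by omega⟩ : Fin 2) = 1 from rfl] <;>
        [rw [hw0]; rw [hw1]] <;> simp [xs]
    rw [e]; exact M2_run_full n m k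
  · rintro ⟨f, hf, hrun⟩
    have hg := good2_of_run hrun hf
    obtain ⟨n, m, k, h0, h1⟩ := hg
    exact ⟨n, m, k, word_eq h0, word_eq h1⟩
end NC

namespace NC

def toSAA {A : Type} {n : ℕ} (M : SemiSortedAA A n) : SAA A n where
  State := M.State
  fintype := M.fintype
  start := {M.start}
  accept := M.accept
  step s c := {t | M.step s c = some t}
  eps _ := ∅
  tape := M.tape

lemma toSAA_run_iff {A : Type} {n : ℕ} (M : SemiSortedAA A n) {s f : M.State} {r} :
    (toSAA M).Run s r f ↔ M.Run s r f := by
  constructor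
  · intro h
    have key : ∀ {s f : (toSAA M).State} {r}, (toSAA M).Run s r f → M.Run s r f := by
      intro s f r h
      induction h with
      | nil s => exact SemiSortedAA.Run.nil s
      | eps h _ ih => exact absurd h (Set.notMem_empty _)
      | step h hr _ ih => exact SemiSortedAA.Run.step h hr ih
    exact key h
  · intro h
    induction h with
    | nil s => exact SAA.Run.nil (M := toSAA M) s
    | step h hr _ ih => exact SAA.Run.step h hr ih

lemma weakly_of_quasi {A : Type} {n : ℕ} {L : Set (Fin n → List A)}
    (h : IsQuasiRegular L) : IsWeaklyRegular L := by
  obtain ⟨M, hM⟩ := h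
  refine ⟨toSAA M, fun w => (hM w).trans ⟨?_, ?_⟩⟩
  · rintro ⟨f, hf, hrun⟩
    exact ⟨M.start, rfl, f, hf, (toSAA_run_iff M).mpr hrun⟩
  · rintro ⟨s₀, hs₀, f, hf, hrun⟩
    have : s₀ = M.start := hs₀
    subst this
    exact ⟨f, hf, (toSAA_run_iff M).mp hrun⟩

open List in
lemma repl_congr {α : Type*} {z w : α} (hzw : z ≠ w) :
    ∀ (a : ℕ) {b : ℕ} {u v : List α},
      List.replicate a z ++ w :: u = List.replicate b z ++ w :: v → a = b ∧ u = v
  | 0, b, u, v, h => by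
      cases b with
      | zero => simpa using h
      | succ b =>
          rw [List.replicate_succ] at h
          simp only [List.replicate_zero, List.nil_append, List.cons_append, List.cons.injEq] at h
          exact absurd h.1 hzw.symm
  | (a+1), b, u, v, h => by
      cases b with
      | zero =>
          rw [List.replicate_succ] at h
          simp only [List.replicate_zero, List.nil_append, List.cons_append, List.cons.injEq] at h
          exact absurd h.1 hzw
      | succ b =>
          rw [List.replicate_succ, List.replicate_succ] at h
          simp only [List.cons_append, List.cons.injEq] at h
          obtain ⟨h1, h2⟩ := repl_congr hzw a h.2
          exact ⟨by omega, h2⟩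

lemma inter_eq : L₁ ∩ L₂ =
    { w : Fin 2 → List (Fin 2) | ∃ n m : ℕ,
        w 0 = List.replicate n 0 ++ 1 :: List.replicate m 0 ∧
        w 1 = List.replicate n 0 ++ 1 :: List.replicate n 0 } := by
  ext w
  constructor
  · rintro ⟨⟨n, m, k, h0, h1⟩, ⟨n', m', k', h0', h1'⟩⟩
    obtain ⟨hn, -⟩ := repl_congr (show (0 : Fin 2) ≠ 1 by decide) n (h0.symm.trans h0')
    obtain ⟨hk, hnk⟩ := repl_congr (show (0 : Fin 2) ≠ 1 by decide) k (h1.symm.trans h1')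
    have hnk' : n = k' := by
      have := congrArg List.length hnk; simpa using this
    refine ⟨n, m, h0, ?_⟩
    rw [h1, hk, ← hn]
  · rintro ⟨n, m, h0, h1⟩
    exact ⟨⟨n, m, n, h0, h1⟩, ⟨n, m, n, h0, h1⟩⟩
end NC

namespace NC
open List

variable {A : Type} {nv : ℕ}

lemma fin2 (i : Fin 2) : i = 0 ∨ i = 1 := by
  fin_cases i
  exacts [Or.inl rfl, Or.inr rfl]

def proj (i : Fin nv) (u : List (Fin nv × Option A)) : List (Option A) :=
  u.filterMap (fun b => if b.1 = i then some b.2 else none)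

@[simp] lemma proj_nil (i : Fin nv) : proj i ([] : List (Fin nv × Option A)) = [] := rfl

lemma proj_cons (i : Fin nv) (b : Fin nv × Option A) (u) :
    proj i (b :: u) = if b.1 = i then b.2 :: proj i u else proj i u := by
  by_cases h : b.1 = i <;> simp [proj, List.filterMap_cons, h]

lemma proj_append (i : Fin nv) (u v : List (Fin nv × Option A)) :
    proj i (u ++ v) = proj i u ++ proj i v := by
  simp [proj, List.filterMap_append]

lemma mem_of_mem_proj {i : Fin nv} {v : Option A} {u : List (Fin nv × Option A)}
    (h : v ∈ proj i u) : (i, v) ∈ u := by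
  simp only [proj, List.mem_filterMap] at h
  obtain ⟨b, hb, hv⟩ := h
  by_cases hbi : b.1 = i
  · rw [if_pos hbi] at hv
    have : b = (i, v) := Prod.ext hbi (by simpa using hv)
    rwa [← this]
  · rw [if_neg hbi] at hv; cases hv

lemma proj_mem {b : Fin nv × Option A} {u : List (Fin nv × Option A)} (h : b ∈ u) :
    b.2 ∈ proj b.1 u := by
  simp only [proj, List.mem_filterMap]
  exact ⟨b, h, by simp⟩

lemma count_proj [DecidableEq A] (i : Fin nv) (v : Option A) :
    ∀ u : List (Fin nv × Option A), List.count v (proj i u) = List.count (i, v) u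
  | [] => rfl
  | b :: u => by
      rw [proj_cons, List.count_cons, ← count_proj i v u]
      by_cases hbi : b.1 = i
      · rw [if_pos hbi, List.count_cons]
        congr 1
        have : b = (i, v) ↔ b.2 = v := by
          constructor
          · rintro rfl; rfl
          · intro h2; exact Prod.ext hbi h2
        simp [this]
      · rw [if_neg hbi]
        have : ¬ b = (i, v) := fun hc => hbi (by rw [hc])
        simp [this]

lemma proj_length (u : List (Fin 2 × Option A)) :
    (proj 0 u).length + (proj 1 u).length = u.length := by
  induction u with
  | nil => rfl
  | cons b u ih =>
      rw [proj_cons, proj_cons]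
      rcases fin2 b.1 with h | h
      · rw [if_pos h, if_neg (by rw [h]; decide)]
        simp only [List.length_cons]; omega
      · rw [if_neg (by rw [h]; decide), if_pos h]
        simp only [List.length_cons]; omega

inductive Path (M : SAA A nv) : M.State → List (Fin nv × Option A) → M.State → Prop
  | nil (s : M.State) : Path M s [] s
  | eps {s t f : M.State} {u : List (Fin nv × Option A)}
      (h : t ∈ M.eps s) (hp : Path M t u f) : Path M s u f
  | step {s t f : M.State} {c : Option A} {u : List (Fin nv × Option A)}
      (h : t ∈ M.step s c) (hp : Path M t u f) : Path M s ((M.tape s, c) :: u) f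

lemma path_append {M : SAA A nv} {s m f : M.State} {u v : List (Fin nv × Option A)}
    (h1 : Path M s u m) (h2 : Path M m v f) : Path M s (u ++ v) f := by
  induction h1 with
  | nil s => simpa using h2
  | eps h _ ih => exact Path.eps h (ih h2)
  | step h _ ih => exact Path.step h (ih h2)

lemma path_split {M : SAA A nv} {s f : M.State} :
    ∀ {w : List (Fin nv × Option A)}, Path M s w f → ∀ u v, w = u ++ v →
      ∃ m, Path M s u m ∧ Path M m v f := by
  intro w hp
  induction hp with
  | nil s =>
      intro u v huv
      obtain ⟨hu, hv⟩ := List.append_eq_nil_iff.mp huv.symm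
      subst hu; subst hv
      exact ⟨s, Path.nil s, Path.nil s⟩
  | eps h _ ih =>
      intro u v huv
      obtain ⟨m, p1, p2⟩ := ih u v huv
      exact ⟨m, Path.eps h p1, p2⟩
  | @step s t f c w h hp ih =>
      intro u v huv
      cases u with
      | nil =>
          refine ⟨s, Path.nil s, ?_⟩
          rw [show v = (M.tape s, c) :: w from by simpa using huv.symm]
          exact Path.step h hp
      | cons a u' =>
          simp only [List.cons_append, List.cons.injEq] at huv
          obtain ⟨ha, hw⟩ := huv
          obtain ⟨m, p1, p2⟩ := ih u' v hw
          exact ⟨m, ha ▸ Path.step h p1, p2⟩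

lemma run_to_path {M : SAA A nv} {s f : M.State} {r} (h : M.Run s r f) :
    ∃ u, Path M s u f ∧ ∀ i, proj i u = r i := by
  induction h with
  | nil s => exact ⟨[], Path.nil s, fun i => rfl⟩
  | eps h _ ih =>
      obtain ⟨u, hp, hproj⟩ := ih
      exact ⟨u, Path.eps h hp, hproj⟩
  | @step s t f c rest r h hr _ ih =>
      obtain ⟨u, hp, hproj⟩ := ih
      refine ⟨(M.tape s, c) :: u, Path.step h hp, fun i => ?_⟩
      rw [proj_cons]
      by_cases hi : M.tape s = i
      · subst hi
        rw [if_pos rfl, hproj, Function.update_self, hr]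
      · rw [if_neg hi, hproj, Function.update_of_ne (Ne.symm hi)]

lemma path_to_run {M : SAA A nv} {s f : M.State} :
    ∀ {u : List (Fin nv × Option A)}, Path M s u f → ∀ r, (∀ i, proj i u = r i) → M.Run s r f := by
  intro u hp
  induction hp with
  | nil s =>
      intro r hr
      have : r = fun _ => [] := by funext i; rw [← hr i]; rfl
      rw [this]; exact SAA.Run.nil s
  | eps h _ ih => exact fun r hr => SAA.Run.eps h (ih r hr)
  | @step s t f c u h hp ih =>
      intro r hr
      refine SAA.Run.step h (c := c) (rest := proj (M.tape s) u)
        (by rw [← hr (M.tape s), proj_cons, if_pos rfl]) (ih _ fun i => ?_)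
      by_cases hi : i = M.tape s
      · subst hi; rw [Function.update_self]
      · rw [Function.update_of_ne hi, ← hr i, proj_cons, if_neg (Ne.symm hi)]

end NC

namespace NC
open List

variable {A : Type} {nv : ℕ}

lemma exists_checkpoints {M : SAA A nv} {s f : M.State} {w : List (Fin nv × Option A)}
    (hp : Path M s w f) :
    ∃ g : ℕ → M.State, g 0 = s ∧
      (∀ k (h : k < w.length), Path M (g k) [w.get ⟨k, h⟩] (g (k+1))) ∧
      Path M (g w.length) [] f := by
  induction hp with
  | nil s => exact ⟨fun _ => s, rfl, fun k h => absurd h (by simp), Path.nil s⟩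
  | @eps s t f u h hp ih =>
      obtain ⟨g, hg0, hgs, hgf⟩ := ih
      refine ⟨fun k => if k = 0 then s else g k, by simp, fun k hk => ?_, ?_⟩
      · rcases Nat.eq_zero_or_pos k with rfl | hkpos
        · simp only [if_pos rfl, if_neg (Nat.one_ne_zero)]
          exact Path.eps h (hg0 ▸ hgs 0 hk)
        · beta_reduce
          rw [if_neg (by omega : ¬ k = 0), if_neg (by omega : ¬ k + 1 = 0)]
          exact hgs k hk
      · beta_reduce
        rcases Nat.eq_zero_or_pos u.length with hu | hu
        · rw [if_pos hu]
          have h2 : Path M (g 0) [] f := hu ▸ hgf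
          rw [hg0] at h2
          exact Path.eps h h2
        · rw [if_neg (by omega : ¬ u.length = 0)]
          exact hgf
  | @step s t f c u h hp ih =>
      obtain ⟨g, hg0, hgs, hgf⟩ := ih
      refine ⟨fun k => Nat.casesOn k s g, rfl, fun k hk => ?_, ?_⟩
      · cases k with
        | zero =>
            simp only [Nat.casesOn]
            have : Path M s [(M.tape s, c)] t := Path.step h (Path.nil t)
            simpa [hg0] using this
        | succ k =>
            simp only [List.length_cons] at hk
            have := hgs k (by omega)
            simpa using this
      · simpa using hgf

lemma path_chain {M : SAA A nv} {w : List (Fin nv × Option A)} {g : ℕ → M.State}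
    (hgs : ∀ k (h : k < w.length), Path M (g k) [w.get ⟨k, h⟩] (g (k+1))) :
    ∀ j i, i ≤ j → j ≤ w.length → Path M (g i) ((w.drop i).take (j - i)) (g j) := by
  intro j
  induction j with
  | zero =>
      intro i hij _
      have : i = 0 := by omega
      subst this
      simpa using Path.nil (g 0)
  | succ j ih =>
      intro i hij hjw
      rcases Nat.lt_or_ge i (j+1) with hlt | hge
      · by_cases hij' : i = j + 1
        · omega
        · have hij2 : i ≤ j := by omega
          have h1 := ih i hij2 (by omega)
          have h2 := hgs j (by omega)
          have := path_append h1 h2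
          have e : (w.drop i).take (j - i) ++ [w.get ⟨j, by omega⟩] = (w.drop i).take (j + 1 - i) := by
            have : j + 1 - i = (j - i) + 1 := by omega
            rw [this, List.take_succ]
            congr 1
            have hlen : j - i < (w.drop i).length := by
              rw [List.length_drop]; omega
            rw [List.getElem?_eq_getElem hlen]
            simp only [List.getElem_drop]
            have : i + (j - i) = j := by omega
            simp [this]
          rwa [e] at this
      · have : i = j + 1 := by omega
        subst this
        simpa using Path.nil (g (j+1))

lemma cut_nil {α : Type*} {z : α} {tail : List α} (hz : z ∉ tail) :
    ∀ (e : ℕ) {nn : ℕ} {q : List α}, List.replicate e z ++ q = List.replicate nn z ++ tail →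
      e ≤ nn ∧ q = List.replicate (nn - e) z ++ tail
  | 0, nn, q, h => ⟨Nat.zero_le _, by simpa using h⟩
  | (e+1), nn, q, h => by
      cases nn with
      | zero =>
          exfalso
          apply hz
          rw [List.replicate_succ] at h
          simp only [List.replicate_zero, List.nil_append] at h
          rw [← h]
          exact List.mem_cons_self
      | succ nn =>
          rw [List.replicate_succ, List.replicate_succ] at h
          simp only [List.cons_append, List.cons.injEq, true_and] at h
          obtain ⟨h1, h2⟩ := cut_nil hz e h
          exact ⟨by omega, by rwa [show nn + 1 - (e+1) = nn - e by omega]⟩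

lemma cut_mid {α : Type*} {z : α} {tail : List α} (hz : z ∉ tail) :
    ∀ (p : List α) {e nn : ℕ} {q : List α},
      p ++ (List.replicate e z ++ q) = List.replicate nn z ++ tail →
      e ≤ nn ∧ p ++ q = List.replicate (nn - e) z ++ tail
  | [], e, nn, q, h => by
      obtain ⟨h1, h2⟩ := cut_nil hz e (by simpa using h)
      exact ⟨h1, by simpa using h2⟩
  | (a :: p), e, nn, q, h => by
      rcases Nat.eq_zero_or_pos e with he | he
      · subst he
        simp only [List.replicate_zero, List.nil_append] at h ⊢
        exact ⟨Nat.zero_le _, by simpa using h⟩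
      · cases nn with
        | zero =>
            exfalso
            apply hz
            simp only [List.replicate_zero, List.nil_append] at h
            rw [← h]
            simp only [List.cons_append, List.mem_cons, List.mem_append]
            right; right; left
            exact List.mem_of_mem_head? (by
              cases e with
              | zero => omega
              | succ e => rw [List.replicate_succ]; rfl)
        | succ nn =>
            rw [List.replicate_succ] at h
            simp only [List.cons_append, List.cons.injEq] at h
            obtain ⟨ha, h2⟩ := h
            obtain ⟨h1, h3⟩ := cut_mid hz p h2
            refine ⟨by omega, ?_⟩
            rw [show nn + 1 - e = (nn - e) + 1 by omega, List.replicate_succ]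
            simp only [List.cons_append, ha, List.cons.injEq, true_and]
            exact h3

lemma split_at_mem {α : Type*} {z w : α} (hzw : z ≠ w) :
    ∀ (nn : ℕ) {P R T : List α}, P ++ R = List.replicate nn z ++ w :: T → w ∈ P →
      ∃ P', P = List.replicate nn z ++ w :: P' ∧ P' ++ R = T
  | 0, P, R, T, h, hw => by
      cases P with
      | nil => simp at hw
      | cons a P' =>
          simp only [List.replicate_zero, List.nil_append, List.cons_append,
            List.cons.injEq] at h
          exact ⟨P', by simp [h.1], h.2⟩
  | (nn+1), P, R, T, h, hw => by
      cases P with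
      | nil => simp at hw
      | cons a P' =>
          rw [List.replicate_succ] at h
          simp only [List.cons_append, List.cons.injEq] at h
          obtain ⟨ha, h2⟩ := h
          have hw' : w ∈ P' := by
            rcases List.mem_cons.mp hw with hwa | hwp
            · exact absurd (hwa.trans ha) hzw.symm
            · exact hwp
          obtain ⟨P'', hP1, hP2⟩ := split_at_mem hzw nn h2 hw'
          exact ⟨P'', by rw [List.replicate_succ]; simp [ha, hP1], hP2⟩

lemma not_weakly_inter : ¬ IsWeaklyRegular (L₁ ∩ L₂) := by
  rintro ⟨M, hM⟩
  letI : Fintype M.State := M.fintype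
  set N := Fintype.card M.State with hN
  set n := 4 * N + 4 with hn
  set w : Fin 2 → List (Fin 2) :=
    ![List.replicate n 0 ++ [1], List.replicate n 0 ++ 1 :: List.replicate n 0] with hw
  have hwL : w ∈ L₁ ∩ L₂ := by
    refine ⟨⟨n, 0, n, ?_, ?_⟩, ⟨n, 0, n, ?_, ?_⟩⟩ <;> simp [hw]
  obtain ⟨s₀, hs₀, f, hf, hrun⟩ := (hM w).mp hwL
  obtain ⟨u, hpath, hproj⟩ := run_to_path hrun
  have hp0 : proj 0 u = xs n ++ [Y, E] := by
    rw [hproj 0]; simp [hw, xs]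
  have hp1 : proj 1 u = xs n ++ Y :: (xs n ++ [E]) := by
    rw [hproj 1]; simp [hw, xs]
  -- counts of special letters in u
  have hcY0 : List.count ((0 : Fin 2), Y) u = 1 := by
    rw [← count_proj, hp0]
    simp [xs, List.count_append, List.count_replicate]
  have hcE0 : List.count ((0 : Fin 2), E) u = 1 := by
    rw [← count_proj, hp0]
    simp [xs, List.count_append, List.count_replicate]
  have hcY1 : List.count ((1 : Fin 2), Y) u = 1 := by
    rw [← count_proj, hp1]
    simp [xs, List.count_append, List.count_replicate]
  have hcE1 : List.count ((1 : Fin 2), E) u = 1 := by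
    rw [← count_proj, hp1]
    simp [xs, List.count_append, List.count_replicate]
  -- split u at the (1, Y) letter
  have hmemY : ((1 : Fin 2), Y) ∈ u := by
    apply mem_of_mem_proj
    rw [hp1]; simp
  obtain ⟨u1, u2, hu⟩ := List.append_of_mem hmemY
  set u1' : List (Fin 2 × Option (Fin 2)) := u1 ++ [(1, Y)] with hu1'
  have hu' : u = u1' ++ u2 := by rw [hu, hu1']; simp
  have hP : proj 1 u1' = proj 1 u1 ++ [Y] := by
    rw [hu1', proj_append, proj_cons]
    norm_num
  have hsplit : proj 1 u1' ++ proj 1 u2 = xs n ++ Y :: (xs n ++ [E]) := by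
    rw [← proj_append, ← hu', hp1]
  obtain ⟨P', hP1, hP2⟩ := split_at_mem (show X ≠ Y by decide) n hsplit
    (by rw [hP]; simp)
  -- show P' = []
  have hcYP : List.count Y (proj 1 u1') + List.count Y (proj 1 u2) = 1 := by
    have := congrArg (List.count Y) hsplit
    rw [List.count_append] at this
    rw [this]
    simp [xs, List.count_append, List.count_replicate]
  have hcntP1 : List.count Y (proj 1 u1') = 1 + List.count Y P' := by
    rw [hP1]
    simp [xs, List.count_append, List.count_replicate]
    omega
  have hPnil : P' = [] := by
    rcases List.eq_nil_or_concat P' with h | ⟨P'', a, rfl⟩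
    · exact h
    · exfalso
      have he : proj 1 u1 ++ [Y] = (xs n ++ Y :: P'') ++ [a] := by
        rw [← hP, hP1]; simp
      have ha : a = Y := by
        have h2 := (List.append_inj' he rfl).2
        simpa using h2.symm
      have hge : List.count Y (P''.concat a) ≥ 1 := by
        rw [ha, List.concat_eq_append]; simp [List.count_append]
      rw [hcntP1] at hcYP
      omega
  rw [hPnil] at hP1 hP2
  simp only [List.append_nil, List.nil_append] at hP1 hP2
  -- hP1 : proj 1 u1' = xs n ++ [Y], hP2 : proj 1 u2 = xs n ++ [E]
  have hlenu2 : n + 1 ≤ u2.length := by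
    have h1 : (proj 1 u2).length ≤ u2.length := List.length_filterMap_le _ _
    rw [hP2] at h1
    simpa [xs] using h1
  -- checkpoints
  obtain ⟨t0, hpA, hpB⟩ := path_split hpath u1' u2 hu'
  obtain ⟨g, hg0, hgs, hgf⟩ := exists_checkpoints hpB
  -- bad letter counts
  set bad : ℕ → ℕ := fun k =>
    List.count ((0 : Fin 2), Y) (u2.take k) + List.count ((0 : Fin 2), E) (u2.take k) +
    List.count ((1 : Fin 2), Y) (u2.take k) + List.count ((1 : Fin 2), E) (u2.take k) with hbad
  have hu2sub : u2.Sublist u := by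
    rw [hu']; exact List.sublist_append_right u1' u2
  have hbadle : ∀ k, bad k ≤ 3 := by
    intro k
    have hsub : (u2.take k).Sublist u := (List.take_sublist k u2).trans hu2sub
    have h1 := (hsub.count_le ((0 : Fin 2), Y)).trans (le_of_eq hcY0)
    have h2 := (hsub.count_le ((0 : Fin 2), E)).trans (le_of_eq hcE0)
    have h4 := (hsub.count_le ((1 : Fin 2), E)).trans (le_of_eq hcE1)
    have h3 : List.count ((1 : Fin 2), Y) (u2.take k) = 0 := by
      have hsub2 := (List.take_sublist k u2).count_le ((1 : Fin 2), Y)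
      have : List.count ((1 : Fin 2), Y) u2 = 0 := by
        rw [← count_proj, hP2]
        simp [xs, List.count_append, List.count_replicate]
      omega
    simp only [hbad]; omega
  -- pigeonhole
  set F : Fin (u2.length + 1) → M.State × Fin 4 :=
    fun k => (g k, ⟨bad k, by have := hbadle k; omega⟩) with hF
  have hcard : Fintype.card (M.State × Fin 4) < Fintype.card (Fin (u2.length + 1)) := by
    simp only [Fintype.card_prod, Fintype.card_fin, ← hN]
    omega
  obtain ⟨k1, k2, hk12, hFeq⟩ := Fintype.exists_ne_map_eq_of_card_lt F hcard
  -- wlog i < j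
  obtain ⟨i, j, hij, hjle, hgij, hbadij⟩ :
      ∃ i j : ℕ, i < j ∧ j ≤ u2.length ∧ g i = g j ∧ bad i = bad j := by
    rcases Ne.lt_or_gt hk12 with h | h
    · refine ⟨k1, k2, h, by omega, ?_, ?_⟩
      · exact congrArg Prod.fst hFeq
      · have := congrArg Prod.snd hFeq
        rw [hF] at this
        simpa using congrArg Fin.val this
    · refine ⟨k2, k1, h, by omega, ?_, ?_⟩
      · exact (congrArg Prod.fst hFeq).symm
      · have := congrArg Prod.snd hFeq
        rw [hF] at this
        have := congrArg Fin.val this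
        simpa using this.symm
  -- the pumping segment
  set slice : List (Fin 2 × Option (Fin 2)) := (u2.drop i).take (j - i) with hslice
  have hdrop : u2.drop i = slice ++ u2.drop j := by
    have h1 := List.take_append_drop (j - i) (u2.drop i)
    rw [List.drop_drop, show i + (j - i) = j from by omega] at h1
    exact h1.symm
  have hdec2 : u2 = u2.take i ++ (slice ++ u2.drop j) := by
    conv_lhs => rw [← List.take_append_drop i u2]
    rw [hdrop]
  have htakej : u2.take j = u2.take i ++ slice := by
    rw [show j = i + (j - i) from by omega, List.take_add]
  have hcnt : ∀ ℓ : Fin 2 × Option (Fin 2),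
      List.count ℓ (u2.take j) = List.count ℓ (u2.take i) + List.count ℓ slice := by
    intro ℓ; rw [htakej, List.count_append]
  have hzero : List.count ((0 : Fin 2), Y) slice = 0 ∧ List.count ((0 : Fin 2), E) slice = 0 ∧
      List.count ((1 : Fin 2), Y) slice = 0 ∧ List.count ((1 : Fin 2), E) slice = 0 := by
    have b1 := hcnt ((0 : Fin 2), Y)
    have b2 := hcnt ((0 : Fin 2), E)
    have b3 := hcnt ((1 : Fin 2), Y)
    have b4 := hcnt ((1 : Fin 2), E)
    simp only [hbad] at hbadij
    omega
  have hslice_sub : slice.Sublist u := by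
    have h1 : slice.Sublist (u2.drop i) := List.take_sublist _ _
    have h2 : (u2.drop i).Sublist u2 := List.drop_sublist _ _
    exact (h1.trans h2).trans hu2sub
  have hmemx : ∀ b ∈ slice, b = ((0 : Fin 2), X) ∨ b = ((1 : Fin 2), X) := by
    intro b hb
    have hbu : b ∈ u := hslice_sub.subset hb
    have hbp := proj_mem hbu
    obtain ⟨z1, z2, z3, z4⟩ := hzero
    rcases fin2 b.1 with h1 | h1
    · rw [h1, hp0] at hbp
      have hv : b.2 = X ∨ b.2 = Y ∨ b.2 = E := by
        simp only [xs, List.mem_append, List.mem_replicate, List.mem_cons,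
          List.mem_singleton, List.not_mem_nil] at hbp
        tauto
      rcases hv with h2 | h2 | h2
      · exact Or.inl (Prod.ext h1 h2)
      · exfalso
        have : b = ((0 : Fin 2), Y) := Prod.ext h1 h2
        have := List.count_pos_iff.mpr (this ▸ hb)
        omega
      · exfalso
        have : b = ((0 : Fin 2), E) := Prod.ext h1 h2
        have := List.count_pos_iff.mpr (this ▸ hb)
        omega
    · rw [h1, hp1] at hbp
      have hv : b.2 = X ∨ b.2 = Y ∨ b.2 = E := by
        simp only [xs, List.mem_append, List.mem_replicate, List.mem_cons,
          List.mem_singleton, List.not_mem_nil] at hbp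
        tauto
      rcases hv with h2 | h2 | h2
      · exact Or.inr (Prod.ext h1 h2)
      · exfalso
        have : b = ((1 : Fin 2), Y) := Prod.ext h1 h2
        have := List.count_pos_iff.mpr (this ▸ hb)
        omega
      · exfalso
        have : b = ((1 : Fin 2), E) := Prod.ext h1 h2
        have := List.count_pos_iff.mpr (this ▸ hb)
        omega
  set e : ℕ := (proj 0 slice).length with he
  set d : ℕ := (proj 1 slice).length with hd
  have hps0 : proj 0 slice = List.replicate e X := by
    rw [he]
    apply List.eq_replicate_of_mem
    intro v hv
    have := mem_of_mem_proj hv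
    rcases hmemx _ this with h2 | h2
    · exact congrArg Prod.snd h2
    · have h3 : (0 : Fin 2) = 1 := congrArg Prod.fst h2
      exact absurd h3 (by decide)
  have hps1 : proj 1 slice = List.replicate d X := by
    rw [hd]
    apply List.eq_replicate_of_mem
    intro v hv
    have := mem_of_mem_proj hv
    rcases hmemx _ this with h2 | h2
    · have h3 : (1 : Fin 2) = 0 := congrArg Prod.fst h2
      exact absurd h3 (by decide)
    · exact congrArg Prod.snd h2
  have hed : e + d = j - i := by
    rw [he, hd, proj_length, hslice, List.length_take, List.length_drop]
    omega
  -- path surgery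
  have hqA : Path M t0 (u2.take i) (g i) := by
    have h1 := path_chain hgs i 0 (Nat.zero_le i) (by omega)
    rw [hg0] at h1
    simpa using h1
  have hqB : Path M (g j) (u2.drop j) (g u2.length) := by
    have h1 := path_chain hgs u2.length j hjle le_rfl
    have h2 : (u2.drop j).take (u2.length - j) = u2.drop j := by
      have h3 : u2.length - j = (u2.drop j).length := List.length_drop.symm
      rw [h3, List.take_length]
    rwa [h2] at h1
  have hqC : Path M t0 (u2.take i ++ u2.drop j) f := by
    refine path_append hqA ?_
    rw [hgij]
    have h1 := path_append hqB hgf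
    simpa using h1
  have hqF : Path M s₀ (u1' ++ (u2.take i ++ u2.drop j)) f := path_append hpA hqC
  -- projections of the shortened path
  have e20 : proj 0 u2 = proj 0 (u2.take i) ++ (List.replicate e X ++ proj 0 (u2.drop j)) := by
    conv_lhs => rw [hdec2]
    rw [proj_append, proj_append, hps0]
  have e21 : proj 1 u2 = proj 1 (u2.take i) ++ (List.replicate d X ++ proj 1 (u2.drop j)) := by
    conv_lhs => rw [hdec2]
    rw [proj_append, proj_append, hps1]
  have hc0 : (proj 0 u1' ++ proj 0 (u2.take i)) ++
      (List.replicate e X ++ proj 0 (u2.drop j)) = List.replicate n X ++ [Y, E] := by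
    have h1 : proj 0 u = proj 0 u1' ++ proj 0 u2 := by
      conv_lhs => rw [hu']
      rw [proj_append]
    rw [e20] at h1
    rw [List.append_assoc, ← h1, hp0]
  obtain ⟨hele, hpq0⟩ := cut_mid (show X ∉ [Y, E] by decide) _ hc0
  have hc1 : proj 1 (u2.take i) ++ (List.replicate d X ++ proj 1 (u2.drop j)) =
      List.replicate n X ++ [E] := by
    rw [← e21, hP2]
  obtain ⟨hdle, hpq1⟩ := cut_mid (show X ∉ [E] by decide) _ hc1
  -- the shortened accepted word
  set w' : Fin 2 → List (Fin 2) :=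
    ![List.replicate (n - e) 0 ++ [1], List.replicate n 0 ++ 1 :: List.replicate (n - d) 0] with hw'
  have hrun' : M.Run s₀ (fun idx => (w' idx).map some ++ [none]) f := by
    refine path_to_run hqF _ (fun idx => ?_)
    rcases fin2 idx with h | h <;> subst h
    · have hsp : proj 0 (u1' ++ (u2.take i ++ u2.drop j)) =
          (proj 0 u1' ++ proj 0 (u2.take i)) ++ proj 0 (u2.drop j) := by
        rw [proj_append (0 : Fin 2) u1' (u2.take i ++ u2.drop j),
          proj_append (0 : Fin 2) (u2.take i) (u2.drop j)]
        exact (List.append_assoc _ _ _).symm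
      rw [hsp, hpq0]
      simp [hw', xs]
    · have hsp : proj 1 (u1' ++ (u2.take i ++ u2.drop j)) =
          proj 1 u1' ++ (proj 1 (u2.take i) ++ proj 1 (u2.drop j)) := by
        rw [proj_append (1 : Fin 2) u1' (u2.take i ++ u2.drop j),
          proj_append (1 : Fin 2) (u2.take i) (u2.drop j)]
      rw [hsp, hP1, hpq1]
      simp [hw', xs]
  have hwL' : w' ∈ L₁ ∩ L₂ := (hM w').mpr ⟨s₀, hs₀, f, hf, hrun'⟩
  rw [inter_eq] at hwL'
  obtain ⟨n₀, m₀, h0', h1'⟩ := hwL'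
  have hw0 : List.replicate (n - e) (0 : Fin 2) ++ 1 :: [] =
      List.replicate n₀ 0 ++ 1 :: List.replicate m₀ 0 := by
    rw [← h0']; simp [hw']
  obtain ⟨hne0, -⟩ := repl_congr (show (0 : Fin 2) ≠ 1 by decide) (n - e) hw0
  have hw1 : List.replicate n (0 : Fin 2) ++ 1 :: List.replicate (n - d) 0 =
      List.replicate n₀ 0 ++ 1 :: List.replicate n₀ 0 := by
    rw [← h1']; simp [hw']
  obtain ⟨hne1, hrest⟩ := repl_congr (show (0 : Fin 2) ≠ 1 by decide) n hw1
  have hnd : n - d = n₀ := by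
    have := congrArg List.length hrest
    simpa using this
  omega

end NC

/-- `L₁` and `L₂` are quasi-regular (hence weakly regular), but their intersection
`L₁ ∩ L₂ = {(x^n y x^m, x^n y x^n)}` is not weakly regular: weakly regular
languages are not closed under intersection. -/
theorem weaklyRegular_not_closed_under_inter :
    IsQuasiRegular L₁ ∧ IsQuasiRegular L₂ ∧
    IsWeaklyRegular L₁ ∧ IsWeaklyRegular L₂ ∧
    L₁ ∩ L₂ =
      { w : Fin 2 → List (Fin 2) | ∃ n m : ℕ,
          w 0 = List.replicate n 0 ++ 1 :: List.replicate m 0 ∧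
          w 1 = List.replicate n 0 ++ 1 :: List.replicate n 0 } ∧
    ¬ IsWeaklyRegular (L₁ ∩ L₂) := by
  exact ⟨NC.quasi_L1, NC.quasi_L2, NC.weakly_of_quasi NC.quasi_L1,
    NC.weakly_of_quasi NC.quasi_L2, NC.inter_eq, NC.not_weakly_inter⟩
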